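/- Let F : A → B be an exact functor of exact categories and K₀(F) as above. Suppose (P', α', Q') ↪ (P, γα, Q) ↠ (N, 1, N) is an exact sequence in Rel(F), where γ is a commutator in Aut(F(Q)) and N ∈ A. Then [(P', α', Q')] = [(P, α, Q)] in K₀(F). -/

import Mathlib

open CategoryTheory CategoryTheory.Limits ZeroObject

universe v u v' u'

variable {A : Type u} [Category.{v} A] {B : Type u'} [Category.{v'} B]

/-- The relative category `Rel(F)` of a functor `F : A ⥤ B`: objects are triples
`(P, α, Q)` with `P, Q ∈ A` and `α : F(P) ≅ F(Q)`. -/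
structure RelObj (F : A ⥤ B) where
  P : A
  Q : A
  α : F.obj P ≅ F.obj Q

variable (F : A ⥤ B)

/-- The defining relations for `K₀(F)`, relative to a class `E` of (admissible) exact
sequences of `A`: (a) additivity on sequences in `Rel(F)` which are componentwise exact,
(b) composition: `[(P,α,Q)] + [(Q,β,R)] = [(P,βα,R)]`. -/
def relK0Set (E : ∀ ⦃X Y Z : A⦄, (X ⟶ Y) → (Y ⟶ Z) → Prop) :
    Set (FreeAbelianGroup (RelObj F)) :=
  {z | (∃ (X' X X'' : RelObj F) (f : X'.P ⟶ X.P) (f' : X.P ⟶ X''.P)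
          (g : X'.Q ⟶ X.Q) (g' : X.Q ⟶ X''.Q),
          E f f' ∧ E g g' ∧
          F.map f ≫ X.α.hom = X'.α.hom ≫ F.map g ∧
          F.map f' ≫ X''.α.hom = X.α.hom ≫ F.map g' ∧
          z = FreeAbelianGroup.of X - FreeAbelianGroup.of X' - FreeAbelianGroup.of X'')
    ∨ (∃ (P Q R' : A) (α : F.obj P ≅ F.obj Q) (β : F.obj Q ≅ F.obj R'),
          z = FreeAbelianGroup.of (⟨P, R', α ≪≫ β⟩ : RelObj F)
              - FreeAbelianGroup.of (⟨P, Q, α⟩ : RelObj F)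
              - FreeAbelianGroup.of (⟨Q, R', β⟩ : RelObj F))}

/-- The relative `K₀` of a functor `F : A ⥤ B` with respect to a class `E` of exact
sequences of `A`. -/
def K0rel (E : ∀ ⦃X Y Z : A⦄, (X ⟶ Y) → (Y ⟶ Z) → Prop) : Type _ :=
  FreeAbelianGroup (RelObj F) ⧸ AddSubgroup.closure (relK0Set F E)

instance (E : ∀ ⦃X Y Z : A⦄, (X ⟶ Y) → (Y ⟶ Z) → Prop) :
    AddCommGroup (K0rel F E) :=
  QuotientAddGroup.Quotient.addCommGroup _

/-- The class `[X] ∈ K₀(F)` of an object `X` of `Rel(F)`. -/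
def K0cls (E : ∀ ⦃X Y Z : A⦄, (X ⟶ Y) → (Y ⟶ Z) → Prop) (X : RelObj F) :
    K0rel F E :=
  QuotientAddGroup.mk' _ (FreeAbelianGroup.of X)


lemma K0cls_trans (E : ∀ ⦃X Y Z : A⦄, (X ⟶ Y) → (Y ⟶ Z) → Prop)
    (P Q R : A) (α : F.obj P ≅ F.obj Q) (β : F.obj Q ≅ F.obj R) :
    K0cls F E ⟨P, R, α ≪≫ β⟩ = K0cls F E ⟨P, Q, α⟩ + K0cls F E ⟨Q, R, β⟩ := by
  have h : FreeAbelianGroup.of (⟨P, R, α ≪≫ β⟩ : RelObj F)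
      - FreeAbelianGroup.of (⟨P, Q, α⟩ : RelObj F)
      - FreeAbelianGroup.of (⟨Q, R, β⟩ : RelObj F)
      ∈ AddSubgroup.closure (relK0Set F E) :=
    AddSubgroup.subset_closure (Or.inr ⟨P, Q, R, α, β, rfl⟩)
  have h2 := (QuotientAddGroup.eq_zero_iff _).mpr h
  unfold K0cls
  show (QuotientAddGroup.mk' _ (FreeAbelianGroup.of _) : FreeAbelianGroup (RelObj F) ⧸ AddSubgroup.closure (relK0Set F E)) = QuotientAddGroup.mk' _ (FreeAbelianGroup.of _) + QuotientAddGroup.mk' _ (FreeAbelianGroup.of _)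
  rw [← sub_eq_zero]
  rw [sub_sub, QuotientAddGroup.mk_sub, QuotientAddGroup.mk_add] at h2
  exact h2

lemma K0cls_refl_zero (E : ∀ ⦃X Y Z : A⦄, (X ⟶ Y) → (Y ⟶ Z) → Prop) (N : A) :
    K0cls F E ⟨N, N, Iso.refl (F.obj N)⟩ = 0 := by
  have h := K0cls_trans F E N N N (Iso.refl (F.obj N)) (Iso.refl (F.obj N))
  rw [show Iso.refl (F.obj N) ≪≫ Iso.refl (F.obj N) = Iso.refl (F.obj N) by
    apply Iso.ext; simp] at h
  exact (left_eq_add.mp h)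

lemma K0cls_symm (E : ∀ ⦃X Y Z : A⦄, (X ⟶ Y) → (Y ⟶ Z) → Prop)
    (Q : A) (σ : F.obj Q ≅ F.obj Q) :
    K0cls F E ⟨Q, Q, σ.symm⟩ = - K0cls F E ⟨Q, Q, σ⟩ := by
  have h := K0cls_trans F E Q Q Q σ σ.symm
  rw [show σ ≪≫ σ.symm = Iso.refl (F.obj Q) by apply Iso.ext; simp] at h
  rw [K0cls_refl_zero] at h
  exact eq_neg_of_add_eq_zero_right h.symm

/-- Let `F : A ⥤ B` be an exact functor of exact categories.  Suppose
`(P', α', Q') ↣ (P, γα, Q) ↠ (N, 1, N)` is an exact sequence in `Rel(F)`, where `γ` is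
a commutator `σ ≪≫ τ ≪≫ σ⁻¹ ≪≫ τ⁻¹` in `Aut(F(Q))` and `N ∈ A`.  Then
`[(P', α', Q')] = [(P, α, Q)]` in `K₀(F)`. -/
theorem K0rel_looparrow
    [Preadditive A] [Preadditive B] [HasZeroObject A] [HasBinaryBiproducts A]
    [F.Additive]
    (E : ∀ ⦃X Y Z : A⦄, (X ⟶ Y) → (Y ⟶ Z) → Prop)
    (hE : ∀ ⦃X Y Z : A⦄ (f : X ⟶ Y) (g : Y ⟶ Z),
      (∃ (r : Y ⟶ X) (t : Z ⟶ Y),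
        f ≫ r = 𝟙 X ∧ t ≫ g = 𝟙 Z ∧ f ≫ g = 0 ∧ t ≫ r = 0 ∧ r ≫ f + g ≫ t = 𝟙 Y) →
      E f g)
    (P' Q' P Q N : A)
    (α' : F.obj P' ≅ F.obj Q') (α : F.obj P ≅ F.obj Q)
    -- a commutator γ in Aut (F(Q))
    (σ τ : F.obj Q ≅ F.obj Q)
    -- the exact sequence (P',α',Q') ↣ (P, γα, Q) ↠ (N,1,N)
    (f : P' ⟶ P) (f' : P ⟶ N) (g : Q' ⟶ Q) (g' : Q ⟶ N)
    (hEf : E f f') (hEg : E g g')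
    (hsq₁ : F.map f ≫ (α ≪≫ (σ ≪≫ τ ≪≫ σ.symm ≪≫ τ.symm)).hom = α'.hom ≫ F.map g)
    (hsq₂ : F.map f' ≫ (Iso.refl (F.obj N)).hom
        = (α ≪≫ (σ ≪≫ τ ≪≫ σ.symm ≪≫ τ.symm)).hom ≫ F.map g') :
    K0cls F E ⟨P', Q', α'⟩ = K0cls F E ⟨P, Q, α⟩ := by
  -- relation (a): the exact sequence
  have ha : K0cls F E ⟨P, Q, α ≪≫ (σ ≪≫ τ ≪≫ σ.symm ≪≫ τ.symm)⟩
      = K0cls F E ⟨P', Q', α'⟩ + K0cls F E ⟨N, N, Iso.refl (F.obj N)⟩ := by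
    have h : FreeAbelianGroup.of (⟨P, Q, α ≪≫ (σ ≪≫ τ ≪≫ σ.symm ≪≫ τ.symm)⟩ : RelObj F)
        - FreeAbelianGroup.of (⟨P', Q', α'⟩ : RelObj F)
        - FreeAbelianGroup.of (⟨N, N, Iso.refl (F.obj N)⟩ : RelObj F)
        ∈ AddSubgroup.closure (relK0Set F E) :=
      AddSubgroup.subset_closure (Or.inl ⟨⟨P', Q', α'⟩,
        ⟨P, Q, α ≪≫ (σ ≪≫ τ ≪≫ σ.symm ≪≫ τ.symm)⟩, ⟨N, N, Iso.refl (F.obj N)⟩,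
        f, f', g, g', hEf, hEg, hsq₁, hsq₂, rfl⟩)
    have h2 := (QuotientAddGroup.eq_zero_iff _).mpr h
    unfold K0cls
    show (QuotientAddGroup.mk' _ (FreeAbelianGroup.of _) : FreeAbelianGroup (RelObj F) ⧸ AddSubgroup.closure (relK0Set F E)) = QuotientAddGroup.mk' _ (FreeAbelianGroup.of _) + QuotientAddGroup.mk' _ (FreeAbelianGroup.of _)
    rw [← sub_eq_zero]
    rw [sub_sub, QuotientAddGroup.mk_sub, QuotientAddGroup.mk_add] at h2
    exact h2
  rw [K0cls_refl_zero, add_zero] at ha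
  -- decompose the left side using relation (b)
  have hb : K0cls F E ⟨P, Q, α ≪≫ (σ ≪≫ τ ≪≫ σ.symm ≪≫ τ.symm)⟩
      = K0cls F E ⟨P, Q, α⟩ := by
    rw [K0cls_trans F E P Q Q α (σ ≪≫ τ ≪≫ σ.symm ≪≫ τ.symm),
      K0cls_trans F E Q Q Q σ (τ ≪≫ σ.symm ≪≫ τ.symm),
      K0cls_trans F E Q Q Q τ (σ.symm ≪≫ τ.symm),
      K0cls_trans F E Q Q Q σ.symm τ.symm,
      K0cls_symm F E Q σ, K0cls_symm F E Q τ]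
    abel
  rw [hb] at ha
  exact ha.symm
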